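/- Let d ≥ 1 and let μ be an ergodic invariant random subgroup of G = ℤ^d ⋊ SL_d(ℤ) with μ({trivial subgroup}) = 0. Then there exists n ≥ 1 such that for μ-almost every H, the subgroup (nℤ)^d × {1} is contained in H; equivalently, H ∩ G_n = (nℤ)^d ⋊ K_H, where G_n = (nℤ)^d ⋊ Γ(n) and K_H ⊆ Γ(n) is the image of H ∩ G_n under the projection (v,M) ↦ M. -/

import Mathlib

open MeasureTheory

/-- Linear automorphisms as additive automorphisms. -/
def linToAddAut {R M : Type*} [Semiring R] [AddCommMonoid M] [Module R M] :
    (M ≃ₗ[R] M) →* Multiplicative (AddAut M) where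
  toFun e := Multiplicative.ofAdd e.toAddEquiv
  map_one' := rfl
  map_mul' _ _ := rfl

/-- Additive automorphisms of `A` as multiplicative automorphisms of `Multiplicative A`. -/
def AddAut.toMultiplicativeHom (A : Type*) [AddGroup A] : Multiplicative (AddAut A) →* MulAut (Multiplicative A) where
  toFun e := AddEquiv.toMultiplicative (Multiplicative.toAdd e)
  map_one' := rfl
  map_mul' _ _ := rfl

/-- The standard action of `SL_d(ℤ)` on `ℤ^d`, as multiplicative automorphisms of
`Multiplicative (ℤ^d)`. -/
noncomputable def phiZ (d : ℕ) :
    Matrix.SpecialLinearGroup (Fin d) ℤ →* MulAut (Multiplicative (Fin d → ℤ)) :=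
  ((AddAut.toMultiplicativeHom (Fin d → ℤ)).comp linToAddAut).comp
    (Matrix.SpecialLinearGroup.toLin' (n := Fin d) (R := ℤ))

/-- The group `G = ℤ^d ⋊ SL_d(ℤ)`. -/
abbrev GZ (d : ℕ) :=
  Multiplicative (Fin d → ℤ) ⋊[phiZ d] Matrix.SpecialLinearGroup (Fin d) ℤ

/-- The σ-algebra on the space of subgroups of a countable discrete group, generated by the
sets `{H : g ∈ H}`. -/
instance (d : ℕ) : MeasurableSpace (Subgroup (GZ d)) :=
  MeasurableSpace.generateFrom {s | ∃ g : GZ d, s = {H : Subgroup (GZ d) | g ∈ H}}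

/-- The conjugation action on subgroups. -/
noncomputable def conjZ {d : ℕ} (g : GZ d) (H : Subgroup (GZ d)) : Subgroup (GZ d) :=
  H.comap (MulAut.conj g).toMonoidHom

/-- An invariant random subgroup of `ℤ^d ⋊ SL_d(ℤ)`. -/
def IsIRSZ {d : ℕ} (μ : Measure (Subgroup (GZ d))) : Prop :=
  IsProbabilityMeasure μ ∧ ∀ g : GZ d, μ.map (conjZ g) = μ

/-- An ergodic invariant random subgroup of `ℤ^d ⋊ SL_d(ℤ)`. -/
def IsErgodicIRSZ {d : ℕ} (μ : Measure (Subgroup (GZ d))) : Prop :=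
  IsIRSZ μ ∧ ∀ s : Set (Subgroup (GZ d)), MeasurableSet s →
    (∀ g : GZ d, conjZ g ⁻¹' s = s) → μ s = 0 ∨ μ s = 1

section Infra
open MeasureTheory

variable {d : ℕ}

/-- translation elements -/
noncomputable def tE (v : Fin d → ℤ) : GZ d := SemidirectProduct.inl (Multiplicative.ofAdd v)

lemma tE_mul (v w : Fin d → ℤ) : tE v * tE w = tE (v + w) := by
  simp [tE, ← map_mul, ← ofAdd_add]

lemma tE_inv (v : Fin d → ℤ) : (tE v)⁻¹ = tE (-v) := by
  simp [tE, ← map_inv, ← ofAdd_neg]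

lemma tE_zero : (tE (0 : Fin d → ℤ)) = 1 := by
  simp [tE, ofAdd_zero]

lemma tE_injective : Function.Injective (tE (d := d)) := by
  intro v w h
  have := congrArg (fun x : GZ d => x.left.toAdd) h
  simpa [tE] using this

lemma phiZ_apply (M : Matrix.SpecialLinearGroup (Fin d) ℤ) (v : Fin d → ℤ) :
    phiZ d M (Multiplicative.ofAdd v) =
      Multiplicative.ofAdd (Matrix.SpecialLinearGroup.toLin' M v) := rfl

end Infra
section Infra2
open MeasureTheory
variable {d : ℕ}

lemma inr_tE_conj' (M : Matrix.SpecialLinearGroup (Fin d) ℤ) (v : Fin d → ℤ) :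
    (SemidirectProduct.inr M : GZ d) * tE v * (SemidirectProduct.inr M)⁻¹ =
      tE (Matrix.SpecialLinearGroup.toLin' M v) := by
  rw [tE, tE, ← phiZ_apply, SemidirectProduct.inl_aut, ← map_inv]

lemma conj_tE' (w : Multiplicative (Fin d → ℤ)) (M : Matrix.SpecialLinearGroup (Fin d) ℤ)
    (v : Fin d → ℤ) :
    (SemidirectProduct.inl w * SemidirectProduct.inr M : GZ d) * tE v *
      (SemidirectProduct.inl w * SemidirectProduct.inr M)⁻¹ =
      tE (Matrix.SpecialLinearGroup.toLin' M v) := by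
  calc (SemidirectProduct.inl w * SemidirectProduct.inr M : GZ d) * tE v *
        (SemidirectProduct.inl w * SemidirectProduct.inr M)⁻¹
      = SemidirectProduct.inl w *
          (SemidirectProduct.inr M * tE v * (SemidirectProduct.inr M)⁻¹) *
          (SemidirectProduct.inl w)⁻¹ := by group
    _ = SemidirectProduct.inl w * tE (Matrix.SpecialLinearGroup.toLin' M v) *
          (SemidirectProduct.inl w)⁻¹ := by rw [inr_tE_conj']
    _ = _ := by
        rw [tE, ← map_inv, ← map_mul, ← map_mul, mul_comm w, mul_assoc, mul_inv_cancel, mul_one]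

lemma conj_tE (g : GZ d) (v : Fin d → ℤ) :
    g * tE v * g⁻¹ = tE (Matrix.SpecialLinearGroup.toLin' g.right v) := by
  obtain ⟨w, M⟩ := g
  have hg : (⟨w, M⟩ : GZ d) = SemidirectProduct.inl w * SemidirectProduct.inr M := by
    ext <;> simp
  rw [hg, conj_tE']
  simp
end Infra2
section Meas
open MeasureTheory
variable {d : ℕ}

instance : Countable (Multiplicative (Fin d → ℤ)) :=
  inferInstanceAs (Countable (Fin d → ℤ))

instance : Countable (Matrix (Fin d) (Fin d) ℤ) :=
  inferInstanceAs (Countable (Fin d → Fin d → ℤ))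

instance : Countable (Matrix.SpecialLinearGroup (Fin d) ℤ) :=
  inferInstanceAs (Countable { A : Matrix (Fin d) (Fin d) ℤ // A.det = 1 })

instance : Countable (GZ d) :=
  Function.Injective.countable (f := fun g : GZ d =>
    (g.left, g.right)) (fun a b h => by
      cases a; cases b
      simpa [Prod.ext_iff, SemidirectProduct.ext_iff] using h)

lemma measurableSet_memE (x : GZ d) : MeasurableSet {H : Subgroup (GZ d) | x ∈ H} :=
  MeasurableSpace.measurableSet_generateFrom ⟨x, rfl⟩

lemma mem_conjZ (g x : GZ d) (H : Subgroup (GZ d)) :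
    x ∈ conjZ g H ↔ g * x * g⁻¹ ∈ H := by
  simp [conjZ, Subgroup.mem_comap]

lemma measurable_conjZ (g : GZ d) : Measurable (conjZ g) := by
  apply measurable_generateFrom
  rintro t ⟨x, rfl⟩
  have : conjZ g ⁻¹' {H : Subgroup (GZ d) | x ∈ H} = {H | g * x * g⁻¹ ∈ H} := by
    ext H; simp [mem_conjZ]
  rw [this]
  exact measurableSet_memE _

lemma meas_preimage {μ : Measure (Subgroup (GZ d))} (hirs : IsIRSZ μ) (g : GZ d)
    {s : Set (Subgroup (GZ d))} (hs : MeasurableSet s) : μ (conjZ g ⁻¹' s) = μ s := by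
  conv_rhs => rw [← hirs.2 g]
  rw [Measure.map_apply (measurable_conjZ g) hs]

lemma null_of_disjoint {X : Type*} [MeasurableSpace X] (μ : Measure X) [IsProbabilityMeasure μ]
    (s : ℕ → Set X) (hm : ∀ n, MeasurableSet (s n)) (hd : Pairwise (Function.onFun Disjoint s))
    (he : ∀ n, μ (s n) = μ (s 0)) : μ (s 0) = 0 := by
  by_contra h
  have h1 : μ (⋃ n, s n) = ∑' n, μ (s n) := measure_iUnion hd hm
  have h2 : (∑' _ : ℕ, μ (s 0)) = ⊤ := ENNReal.tsum_const_eq_top_of_ne_zero h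
  have h3 : (∑' n, μ (s n)) = ⊤ := by rw [← h2]; exact tsum_congr he
  have h4 : μ (⋃ n, s n) ≤ 1 := prob_le_one
  rw [h1, h3] at h4
  simp at h4

instance : Countable (AddSubgroup (Fin d → ℤ)) := by
  have h1 : Countable (Submodule ℤ (Fin d → ℤ)) := by
    have hfg : ∀ p : Submodule ℤ (Fin d → ℤ), p.FG := fun p => IsNoetherian.noetherian p
    exact Function.Injective.countable (f := fun p : Submodule ℤ (Fin d → ℤ) =>
      (hfg p).choose) (fun p q h => by
        have h' : (hfg p).choose = (hfg q).choose := h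
        have hp := (hfg p).choose_spec
        have hq := (hfg q).choose_spec
        rw [← hp, ← hq, h'])
  exact Function.Injective.countable
    (f := fun L : AddSubgroup (Fin d → ℤ) => AddSubgroup.toIntSubmodule L)
    (fun a b h => by simpa using congrArg AddSubgroup.toIntSubmodule.symm h)

end Meas
section LinAlg
open Matrix
variable {d : ℕ}

lemma toLin'_eq_mulVec (M : Matrix.SpecialLinearGroup (Fin d) ℤ) (v : Fin d → ℤ) :
    Matrix.SpecialLinearGroup.toLin' M v = (M : Matrix (Fin d) (Fin d) ℤ) *ᵥ v := by
  rw [Matrix.SpecialLinearGroup.toLin'_apply, Matrix.toLin'_apply]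

lemma toLin'_ne_id {M : Matrix.SpecialLinearGroup (Fin d) ℤ} (hM : M ≠ 1) :
    ∃ w : Fin d → ℤ, Matrix.SpecialLinearGroup.toLin' M w ≠ w := by
  by_contra h
  push_neg at h
  apply hM
  ext i j
  have := h (Pi.single j 1)
  rw [toLin'_eq_mulVec, Matrix.mulVec_single_one] at this
  have := congrFun this i
  simp only [Matrix.col_apply] at this
  rw [this]
  simp [Matrix.one_apply, Pi.single_apply, eq_comm]

lemma toLin'_zero_iff (M : Matrix.SpecialLinearGroup (Fin d) ℤ) (v : Fin d → ℤ) :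
    Matrix.SpecialLinearGroup.toLin' M v = 0 ↔ v = 0 := by
  constructor
  · intro h
    have := congrArg (Matrix.SpecialLinearGroup.toLin' M).symm h
    simpa using this
  · rintro rfl; simp

/-- transvection as an element of `SL_d(ℤ)` -/
def TV (i j : Fin d) (hij : i ≠ j) (t : ℤ) : Matrix.SpecialLinearGroup (Fin d) ℤ :=
  ⟨Matrix.transvection i j t, Matrix.det_transvection_of_ne i j hij t⟩

lemma TV_coe (i j : Fin d) (hij : i ≠ j) (t : ℤ) :
    (TV i j hij t : Matrix (Fin d) (Fin d) ℤ) = Matrix.transvection i j t := rfl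

lemma TV_mul (i j : Fin d) (hij : i ≠ j) (s t : ℤ) :
    TV i j hij s * TV i j hij t = TV i j hij (s + t) := by
  apply Subtype.ext
  show (TV i j hij s : Matrix (Fin d) (Fin d) ℤ) * (TV i j hij t) = _
  rw [TV_coe, TV_coe, TV_coe]
  exact Matrix.transvection_mul_transvection_same i j hij s t

lemma TV_apply (i j : Fin d) (hij : i ≠ j) (t : ℤ) (v : Fin d → ℤ) :
    Matrix.SpecialLinearGroup.toLin' (TV i j hij t) v = v + (t * v j) • Pi.single i 1 := by
  rw [toLin'_eq_mulVec, TV_coe]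
  rw [Matrix.transvection, Matrix.add_mulVec, Matrix.one_mulVec,
    Matrix.single_mulVec]
  funext k
  rcases eq_or_ne k i with rfl | hk
  · simp [mul_comm]
  · simp [Function.update_of_ne hk, hk, Pi.single_apply]

lemma elem_lemma (L : AddSubgroup (Fin d → ℤ)) (v0 : Fin d → ℤ) (hv0 : v0 ∈ L) (hv0ne : v0 ≠ 0)
    (hstab : ∀ i j : Fin d, i ≠ j → ∃ t : ℤ, t ≠ 0 ∧ ∀ v ∈ L, v + (t * v j) • Pi.single i 1 ∈ L) :
    ∃ c : ℤ, c ≠ 0 ∧ ∀ w : Fin d → ℤ, c • w ∈ L := by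
  obtain ⟨j, hj⟩ : ∃ j, v0 j ≠ 0 := by
    by_contra h; push_neg at h; exact hv0ne (funext fun k => h k)
  have sub_single : ∀ (u : Fin d → ℤ) (i : Fin d) (c : ℤ),
      u + c • Pi.single i 1 - u = Pi.single i c := by
    intro u i c
    funext l
    rcases eq_or_ne l i with rfl | hl
    · simp
    · simp [Pi.single_apply, hl]
  have key : ∀ k : Fin d, ∃ b : ℤ, b ≠ 0 ∧ (Pi.single k b : Fin d → ℤ) ∈ L := by
    by_cases hsub : ∀ k : Fin d, k = j
    · intro k
      rw [hsub k]
      refine ⟨v0 j, hj, ?_⟩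
      have : (Pi.single j (v0 j) : Fin d → ℤ) = v0 := by
        funext l; rw [hsub l]; simp
      rwa [this]
    · push_neg at hsub
      obtain ⟨i0, hi0⟩ := hsub
      have step1 : ∀ i : Fin d, i ≠ j → ∃ b : ℤ, b ≠ 0 ∧ (Pi.single i b : Fin d → ℤ) ∈ L := by
        intro i hi
        obtain ⟨t, ht0, ht⟩ := hstab i j hi
        refine ⟨t * v0 j, mul_ne_zero ht0 hj, ?_⟩
        have h2 := AddSubgroup.sub_mem L (ht v0 hv0) hv0
        rwa [sub_single] at h2
      intro k
      rcases eq_or_ne k j with rfl | hk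
      · obtain ⟨b, hb0, hb⟩ := step1 i0 hi0
        obtain ⟨t, ht0, ht⟩ := hstab k i0 (Ne.symm hi0)
        have h2 := AddSubgroup.sub_mem L (ht _ hb) hb
        rw [sub_single] at h2
        refine ⟨t * b, mul_ne_zero ht0 hb0, ?_⟩
        simpa using h2
      · exact step1 k hk
  choose b hb0 hbL using key
  refine ⟨∏ k : Fin d, b k, Finset.prod_ne_zero_iff.mpr (fun k _ => hb0 k), ?_⟩
  intro w
  have hrw : (∏ k : Fin d, b k) • w =
      ∑ k : Fin d, (w k * ∏ l ∈ Finset.univ.erase k, b l) • (Pi.single k (b k) : Fin d → ℤ) := by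
    funext i
    rw [Finset.sum_apply]
    have hterm : ∀ k : Fin d, ((w k * ∏ l ∈ Finset.univ.erase k, b l) •
        (Pi.single k (b k) : Fin d → ℤ)) i =
        if k = i then w k * ((∏ l ∈ Finset.univ.erase k, b l) * b k) else 0 := by
      intro k
      rcases eq_or_ne k i with rfl | hk
      · simp [mul_assoc]
      · simp [hk, Pi.single_apply, Ne.symm hk]
    rw [Finset.sum_congr rfl (fun k _ => hterm k), Finset.sum_ite_eq' Finset.univ i]
    rw [Finset.prod_erase_mul Finset.univ b (Finset.mem_univ i)]
    simp [mul_comm]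
  rw [hrw]
  exact AddSubgroup.sum_mem L (fun k _ => AddSubgroup.zsmul_mem L (hbL k) _)

end LinAlg
section StepA
open MeasureTheory
variable {d : ℕ}

/-- The event that `H` has trivial intersection with the translation subgroup. -/
def Etriv : Set (Subgroup (GZ d)) := {H | ∀ v : Fin d → ℤ, v ≠ 0 → tE v ∉ H}

lemma measurableSet_Etriv : MeasurableSet (Etriv : Set (Subgroup (GZ d))) := by
  have : (Etriv : Set (Subgroup (GZ d))) =
      ⋂ v : Fin d → ℤ, ⋂ (_ : v ≠ 0), {H : Subgroup (GZ d) | tE v ∈ H}ᶜ := by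
    ext H; simp [Etriv]
  rw [this]
  exact MeasurableSet.iInter fun v => MeasurableSet.iInter fun _ =>
    (measurableSet_memE (tE v)).compl

lemma zsmul_ne_zero {u : Fin d → ℤ} (hu : u ≠ 0) {c : ℤ} (hc : c ≠ 0) : c • u ≠ 0 := by
  intro h
  apply hu
  funext i
  have := congrFun h i
  simp only [Pi.smul_apply, smul_eq_mul, Pi.zero_apply] at this ⊢
  rcases mul_eq_zero.mp this with h' | h'
  · exact absurd h' hc
  · exact h'

lemma conjZ_preimage_Etriv (g : GZ d) : conjZ g ⁻¹' Etriv = (Etriv : Set (Subgroup (GZ d))) := by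
  ext H
  have hmem : ∀ v : Fin d → ℤ, (tE v ∈ conjZ g H ↔
      tE (Matrix.SpecialLinearGroup.toLin' g.right v) ∈ H) := by
    intro v; rw [mem_conjZ, conj_tE]
  simp only [Set.mem_preimage, Etriv, Set.mem_setOf_eq]
  constructor
  · intro h v hv
    have h2 := h ((Matrix.SpecialLinearGroup.toLin' g.right).symm v) (by
      intro h0
      have : v = 0 := by
        have := congrArg (Matrix.SpecialLinearGroup.toLin' g.right) h0
        simpa using this
      exact hv this)
    rw [hmem, LinearEquiv.apply_symm_apply] at h2
    exact h2
  · intro h v hv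
    rw [hmem]
    exact h _ (by rwa [Ne, toLin'_zero_iff])

lemma tE_conj_x (z : Fin d → ℤ) (x : GZ d) :
    tE z * x * (tE z)⁻¹ = tE (z - Matrix.SpecialLinearGroup.toLin' x.right z) * x := by
  have h1 : tE z * x * (tE z)⁻¹ = tE z * (x * (tE z)⁻¹ * x⁻¹) * x := by group
  rw [h1, tE_inv, conj_tE, map_neg, tE_mul, ← sub_eq_add_neg]

lemma Etriv_null {μ : Measure (Subgroup (GZ d))} (hirs : IsIRSZ μ)
    (hnontriv : μ {H : Subgroup (GZ d) | H = ⊥} = 0) : μ (Etriv : Set (Subgroup (GZ d))) = 0 := by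
  haveI := hirs.1
  classical
  set S : GZ d → Set (Subgroup (GZ d)) := fun x =>
    if x = 1 then ∅ else Etriv ∩ {H | x ∈ H} with hS
  have hcover : (Etriv : Set (Subgroup (GZ d))) ⊆
      {H : Subgroup (GZ d) | H = ⊥} ∪ ⋃ x : GZ d, S x := by
    intro H hH
    by_cases hb : H = ⊥
    · exact Or.inl hb
    · obtain ⟨⟨x, hxH⟩, hx1⟩ := Subgroup.ne_bot_iff_exists_ne_one.mp hb
      have hx1' : x ≠ 1 := by simpa [Subtype.ext_iff] using hx1
      refine Or.inr (Set.mem_iUnion.mpr ⟨x, ?_⟩)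
      rw [hS]
      simp only [if_neg hx1']
      exact ⟨hH, hxH⟩
  have hnull : ∀ x : GZ d, μ (S x) = 0 := by
    intro x
    by_cases hx : x = 1
    · simp [hS, hx]
    rw [hS]
    simp only [if_neg hx]
    by_cases hM : x.right = 1
    · -- x is a nonzero translation
      have hxl : x = tE x.left.toAdd := by
        rw [tE, ofAdd_toAdd, ← SemidirectProduct.inl_left_mul_inr_right x, hM]
        simp
      have hempty : Etriv ∩ {H : Subgroup (GZ d) | x ∈ H} = ∅ := by
        ext H
        simp only [Set.mem_inter_iff, Set.mem_empty_iff_false, iff_false, not_and,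
          Etriv, Set.mem_setOf_eq]
        intro hH hxH
        have hv : x.left.toAdd ≠ 0 := by
          intro h0
          apply hx
          rw [hxl, h0, tE_zero]
        exact hH _ hv (by rwa [← hxl])
      rw [hempty]
      simp
    · -- x has a nontrivial matrix part
      obtain ⟨w, hw⟩ := toLin'_ne_id hM
      set u : Fin d → ℤ := Matrix.SpecialLinearGroup.toLin' x.right w - w with hu
      have hu0 : u ≠ 0 := by
        rw [hu, sub_ne_zero]; exact hw
      set s : ℕ → Set (Subgroup (GZ d)) := fun k =>
        Etriv ∩ {H | tE ((k : ℤ) • u) * x ∈ H} with hs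
      have hs0 : s 0 = Etriv ∩ {H : Subgroup (GZ d) | x ∈ H} := by
        rw [hs]
        norm_num [tE_zero]
      have hmeas : ∀ k, MeasurableSet (s k) := fun k =>
        measurableSet_Etriv.inter (measurableSet_memE _)
      have heq : ∀ k : ℕ, μ (s k) = μ (s 0) := by
        intro k
        have hpre : conjZ (tE ((k : ℤ) • (-w))) ⁻¹' (s 0) = s k := by
          rw [hs0, hs, Set.preimage_inter, conjZ_preimage_Etriv]
          congr 1
          ext H
          simp only [Set.mem_preimage, Set.mem_setOf_eq, mem_conjZ]
          rw [tE_conj_x]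
          have harg : (k : ℤ) • (-w) -
              Matrix.SpecialLinearGroup.toLin' x.right ((k : ℤ) • (-w)) = (k : ℤ) • u := by
            rw [hu, _root_.map_smul, map_neg, smul_neg, smul_neg, smul_sub]
            abel
          rw [harg]
        rw [← hpre]
        exact meas_preimage hirs _ (hmeas 0)
      have hdisj : Pairwise (Function.onFun Disjoint s) := by
        intro k l hkl
        rw [Function.onFun, Set.disjoint_left]
        rintro H ⟨hHE, hHk⟩ ⟨-, hHl⟩
        have hmem : tE (((k : ℤ) - (l : ℤ)) • u) ∈ H := by
          have := H.mul_mem hHk (H.inv_mem hHl)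
          have hcalc : tE ((k : ℤ) • u) * x * (tE ((l : ℤ) • u) * x)⁻¹ =
              tE (((k : ℤ) - (l : ℤ)) • u) := by
            rw [mul_inv_rev, tE_inv, sub_smul]
            calc tE ((k : ℤ) • u) * x * (x⁻¹ * tE (-((l : ℤ) • u)))
                = tE ((k : ℤ) • u) * tE (-((l : ℤ) • u)) := by group
              _ = tE ((k : ℤ) • u - (l : ℤ) • u) := by rw [tE_mul]; ring_nf
          rwa [hcalc] at this
        have hne : ((k : ℤ) - (l : ℤ)) • u ≠ 0 := by
          apply zsmul_ne_zero hu0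
          simpa [sub_eq_zero] using hkl
        exact hHE _ hne hmem
      have := null_of_disjoint μ s hmeas hdisj heq
      rwa [hs0] at this
  exact measure_mono_null hcover
    (measure_union_null hnontriv (measure_iUnion_null hnull))

end StepA
section StepB
open MeasureTheory
variable {d : ℕ}

/-- The translation part of a subgroup. -/
def LH (H : Subgroup (GZ d)) : AddSubgroup (Fin d → ℤ) where
  carrier := {v | tE v ∈ H}
  zero_mem' := by
    show tE (0 : Fin d → ℤ) ∈ H
    rw [tE_zero]; exact H.one_mem
  add_mem' := by
    intro a b ha hb
    have := H.mul_mem ha hb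
    rwa [tE_mul] at this
  neg_mem' := by
    intro a ha
    have := H.inv_mem ha
    rwa [tE_inv] at this

lemma mem_LH (H : Subgroup (GZ d)) (v : Fin d → ℤ) : v ∈ LH H ↔ tE v ∈ H := Iff.rfl

/-- The event that the translation part is exactly `L`. -/
def FL (L : AddSubgroup (Fin d → ℤ)) : Set (Subgroup (GZ d)) :=
  {H | ∀ v : Fin d → ℤ, tE v ∈ H ↔ v ∈ L}

lemma mem_FL_iff_LH (H : Subgroup (GZ d)) (L : AddSubgroup (Fin d → ℤ)) :
    H ∈ FL L ↔ LH H = L := by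
  constructor
  · intro h
    ext v
    rw [mem_LH]
    exact h v
  · rintro rfl v
    exact Iff.rfl

lemma measurableSet_FL (L : AddSubgroup (Fin d → ℤ)) : MeasurableSet (FL L) := by
  have : FL L = ⋂ v : Fin d → ℤ, {H : Subgroup (GZ d) | tE v ∈ H ↔ v ∈ L} := by
    ext H; simp [FL, Set.mem_iInter]
  rw [this]
  refine MeasurableSet.iInter fun v => ?_
  by_cases hv : v ∈ L
  · have : {H : Subgroup (GZ d) | tE v ∈ H ↔ v ∈ L} = {H | tE v ∈ H} := by
      ext H; simp [hv]
    rw [this]; exact measurableSet_memE _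
  · have : {H : Subgroup (GZ d) | tE v ∈ H ↔ v ∈ L} = {H | tE v ∈ H}ᶜ := by
      ext H; simp [hv]
    rw [this]; exact (measurableSet_memE _).compl

/-- Action of `SL_d(ℤ)` on subgroups of `ℤ^d`. -/
def actL (N : Matrix.SpecialLinearGroup (Fin d) ℤ) (L : AddSubgroup (Fin d → ℤ)) :
    AddSubgroup (Fin d → ℤ) :=
  L.map (Matrix.SpecialLinearGroup.toLin' N).toLinearMap.toAddMonoidHom

lemma mem_actL (N : Matrix.SpecialLinearGroup (Fin d) ℤ) (L : AddSubgroup (Fin d → ℤ))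
    (v : Fin d → ℤ) :
    v ∈ actL N L ↔ (Matrix.SpecialLinearGroup.toLin' N).symm v ∈ L := by
  rw [actL, AddSubgroup.mem_map]
  constructor
  · rintro ⟨w, hw, rfl⟩
    simpa using hw
  · intro h
    exact ⟨_, h, by simp⟩

lemma actL_one (L : AddSubgroup (Fin d → ℤ)) : actL 1 L = L := by
  ext v; rw [mem_actL, map_one]
  have h1 : (1 : (Fin d → ℤ) ≃ₗ[ℤ] (Fin d → ℤ)).symm v = v := rfl
  rw [h1]

lemma toLin'_mul_apply (M N : Matrix.SpecialLinearGroup (Fin d) ℤ) (v : Fin d → ℤ) :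
    Matrix.SpecialLinearGroup.toLin' (M * N) v =
      Matrix.SpecialLinearGroup.toLin' M (Matrix.SpecialLinearGroup.toLin' N v) := by
  rw [toLin'_eq_mulVec, toLin'_eq_mulVec, toLin'_eq_mulVec]
  rw [Matrix.SpecialLinearGroup.coe_mul, ← Matrix.mulVec_mulVec]

lemma actL_mul (M N : Matrix.SpecialLinearGroup (Fin d) ℤ) (L : AddSubgroup (Fin d → ℤ)) :
    actL (M * N) L = actL M (actL N L) := by
  ext v
  rw [mem_actL, mem_actL, mem_actL]
  constructor
  · intro h
    have : (Matrix.SpecialLinearGroup.toLin' N).symm ((Matrix.SpecialLinearGroup.toLin' M).symm v)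
        = (Matrix.SpecialLinearGroup.toLin' (M * N)).symm v := by
      apply (Matrix.SpecialLinearGroup.toLin' (M * N)).injective
      rw [LinearEquiv.apply_symm_apply, toLin'_mul_apply, LinearEquiv.apply_symm_apply,
        LinearEquiv.apply_symm_apply]
    rwa [this]
  · intro h
    have : (Matrix.SpecialLinearGroup.toLin' (M * N)).symm v
        = (Matrix.SpecialLinearGroup.toLin' N).symm
            ((Matrix.SpecialLinearGroup.toLin' M).symm v) := by
      apply (Matrix.SpecialLinearGroup.toLin' (M * N)).injective
      rw [LinearEquiv.apply_symm_apply, toLin'_mul_apply, LinearEquiv.apply_symm_apply,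
        LinearEquiv.apply_symm_apply]
    rw [this]; exact h

lemma conjZ_preimage_FL (N : Matrix.SpecialLinearGroup (Fin d) ℤ)
    (L : AddSubgroup (Fin d → ℤ)) :
    conjZ (SemidirectProduct.inr N) ⁻¹' FL L = FL (actL N L) := by
  ext H
  simp only [Set.mem_preimage, FL, Set.mem_setOf_eq]
  have hconj : ∀ v : Fin d → ℤ, tE v ∈ conjZ (SemidirectProduct.inr N : GZ d) H ↔
      tE (Matrix.SpecialLinearGroup.toLin' N v) ∈ H := by
    intro v
    rw [mem_conjZ, conj_tE]
    simp
  constructor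
  · intro h v
    rw [mem_actL]
    have := h ((Matrix.SpecialLinearGroup.toLin' N).symm v)
    rw [hconj, LinearEquiv.apply_symm_apply] at this
    exact this
  · intro h v
    rw [hconj, h, mem_actL, LinearEquiv.symm_apply_apply]

/-- bad subgroups: some transvection has infinite orbit -/
def BadL (L : AddSubgroup (Fin d → ℤ)) : Prop :=
  ∃ i j : Fin d, ∃ hij : i ≠ j, ∀ t : ℤ, 1 ≤ t → actL (TV i j hij t) L ≠ L

lemma TV_zero (i j : Fin d) (hij : i ≠ j) : TV i j hij 0 = 1 := by
  apply Subtype.ext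
  rw [TV_coe]
  simpa using Matrix.transvection_zero (i := i) (j := j) (R := ℤ)

lemma bad_null {μ : Measure (Subgroup (GZ d))} (hirs : IsIRSZ μ)
    (L : AddSubgroup (Fin d → ℤ)) (hbad : BadL L) : μ (FL L) = 0 := by
  haveI := hirs.1
  obtain ⟨i, j, hij, hbad⟩ := hbad
  set s : ℕ → Set (Subgroup (GZ d)) := fun k => FL (actL (TV i j hij (k : ℤ)) L) with hs
  have hs0 : s 0 = FL L := by
    rw [hs]; norm_num [TV_zero, actL_one]
  have hmeas : ∀ k, MeasurableSet (s k) := fun k => measurableSet_FL _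
  have heq : ∀ k : ℕ, μ (s k) = μ (s 0) := by
    intro k
    have : conjZ (SemidirectProduct.inr (TV i j hij (k : ℤ))) ⁻¹' (s 0) = s k := by
      rw [hs0, conjZ_preimage_FL]
    rw [← this]
    exact meas_preimage hirs _ (hmeas 0)
  have hinj : ∀ k l : ℕ, actL (TV i j hij (k : ℤ)) L = actL (TV i j hij (l : ℤ)) L → k = l := by
    intro k l h
    by_contra hkl
    wlog hlt : k < l generalizing k l
    · exact this l k h.symm (Ne.symm hkl) (by omega)
    have h2 : actL (TV i j hij ((l : ℤ) - (k : ℤ))) L = L := by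
      have h3 := congrArg (actL (TV i j hij (-(k : ℤ)))) h
      rw [← actL_mul, ← actL_mul, TV_mul, TV_mul] at h3
      rw [neg_add_cancel] at h3
      rw [TV_zero, actL_one] at h3
      have h4 : (l : ℤ) - (k : ℤ) = -(k : ℤ) + l := by ring
      rw [h4]
      exact h3.symm
    exact hbad ((l : ℤ) - k) (by omega) h2
  have hdisj : Pairwise (Function.onFun Disjoint s) := by
    intro k l hkl
    rw [Function.onFun, Set.disjoint_left]
    intro H hk hl
    rw [hs] at hk hl
    rw [mem_FL_iff_LH] at hk hl
    exact hkl (hinj k l (hk ▸ hl ▸ rfl))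
  have := null_of_disjoint μ s hmeas hdisj heq
  rwa [hs0] at this

end StepB
section Final
open MeasureTheory
variable {d : ℕ}

/-- The event that `H` contains all translations by multiples of `n`. -/
def Efull (n : ℕ) : Set (Subgroup (GZ d)) := {H | ∀ w : Fin d → ℤ, tE ((n : ℤ) • w) ∈ H}

lemma measurableSet_Efull (n : ℕ) : MeasurableSet (Efull n : Set (Subgroup (GZ d))) := by
  have : (Efull n : Set (Subgroup (GZ d))) =
      ⋂ w : Fin d → ℤ, {H : Subgroup (GZ d) | tE ((n : ℤ) • w) ∈ H} := by
    ext H; simp [Efull]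
  rw [this]
  exact MeasurableSet.iInter fun w => measurableSet_memE _

lemma conjZ_preimage_Efull (g : GZ d) (n : ℕ) :
    conjZ g ⁻¹' Efull n = (Efull n : Set (Subgroup (GZ d))) := by
  ext H
  simp only [Set.mem_preimage, Efull, Set.mem_setOf_eq]
  have hmem : ∀ w : Fin d → ℤ, (tE ((n : ℤ) • w) ∈ conjZ g H ↔
      tE ((n : ℤ) • (Matrix.SpecialLinearGroup.toLin' g.right w)) ∈ H) := by
    intro w
    rw [mem_conjZ, conj_tE, _root_.map_smul]
  constructor
  · intro h w
    have := h ((Matrix.SpecialLinearGroup.toLin' g.right).symm w)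
    rw [hmem, LinearEquiv.apply_symm_apply] at this
    exact this
  · intro h w
    rw [hmem]
    exact h _
end Final

/-- **IRSs of `ℤ^d ⋊ SL_d(ℤ)`.**  If `μ` is a nontrivial ergodic IRS of
`G = ℤ^d ⋊ SL_d(ℤ)`, then there is `n ≥ 1` such that almost every `H` contains
`(nℤ)^d × {1}`; equivalently, `H ∩ G_n` is of the form `(nℤ)^d ⋊ K` with
`K = pr (H ∩ G_n) ≤ Γ(n)`. -/
theorem ergodic_irs_of_integral_special_affine_group
    {d : ℕ} (hd : 1 ≤ d) (μ : Measure (Subgroup (GZ d)))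
    (hirs : IsErgodicIRSZ μ) (hnontriv : μ {H : Subgroup (GZ d) | H = ⊥} = 0) :
    ∃ n : ℕ, 1 ≤ n ∧ ∀ᵐ H ∂μ, ∀ v : Fin d → ℤ, (∀ i, (n : ℤ) ∣ v i) →
      (SemidirectProduct.inl (Multiplicative.ofAdd v) : GZ d) ∈ H := by
  classical
  obtain ⟨hirs', herg⟩ := hirs
  haveI := hirs'.1
  set bigU : Set (Subgroup (GZ d)) := ⋃ n : ℕ, ⋃ (_ : 1 ≤ n), Efull n with hbigU
  have hUmeas : MeasurableSet bigU :=
    MeasurableSet.iUnion fun n => MeasurableSet.iUnion fun _ => measurableSet_Efull n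
  -- complement of bigU is contained in a null set
  have hcompl : bigUᶜ ⊆
      Etriv ∪ ⋃ L : {L : AddSubgroup (Fin d → ℤ) // BadL L}, FL (L : AddSubgroup (Fin d → ℤ)) := by
    intro H hH
    by_contra hcon
    rw [Set.mem_union] at hcon
    push_neg at hcon
    obtain ⟨h1, h2⟩ := hcon
    -- H has a nonzero translation
    have hex : ∃ v : Fin d → ℤ, v ≠ 0 ∧ tE v ∈ H := by
      by_contra h
      push_neg at h
      exact h1 (fun v hv => h v hv)
    obtain ⟨v0, hv0ne, hv0⟩ := hex
    -- LH H is not bad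
    have hgood : ¬ BadL (LH H) := by
      intro hbad
      exact h2 (Set.mem_iUnion.mpr ⟨⟨LH H, hbad⟩, (mem_FL_iff_LH H (LH H)).mpr rfl⟩)
    rw [BadL] at hgood
    push_neg at hgood
    -- derive the stabilization hypothesis
    have hstab : ∀ i j : Fin d, i ≠ j →
        ∃ t : ℤ, t ≠ 0 ∧ ∀ v ∈ LH H, v + (t * v j) • Pi.single i 1 ∈ LH H := by
      intro i j hij
      obtain ⟨t, ht1, hteq⟩ := hgood i j hij
      refine ⟨t, by omega, fun v hv => ?_⟩
      have hm : Matrix.SpecialLinearGroup.toLin' (TV i j hij t) v ∈ actL (TV i j hij t) (LH H) :=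
        AddSubgroup.mem_map.mpr ⟨v, hv, rfl⟩
      rw [hteq, TV_apply] at hm
      exact hm
    obtain ⟨c, hc0, hc⟩ := elem_lemma (LH H) v0 hv0 hv0ne hstab
    -- H belongs to Efull c.natAbs
    apply hH
    rw [hbigU]
    refine Set.mem_iUnion.mpr ⟨c.natAbs, Set.mem_iUnion.mpr ⟨?_, ?_⟩⟩
    · exact Nat.one_le_iff_ne_zero.mpr (Int.natAbs_ne_zero.mpr hc0)
    · intro w
      rcases Int.natAbs_eq c with h | h
      · have := hc w
        rw [mem_LH] at this
        rwa [← h]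
      · have := hc (-w)
        rw [mem_LH] at this
        have harg : ((c.natAbs : ℤ)) • w = c • (-w) := by
          rw [h]; simp
        rwa [harg]
  have hUnull : μ bigUᶜ = 0 := by
    refine measure_mono_null hcompl (measure_union_null (Etriv_null hirs' hnontriv)
      (measure_iUnion_null fun L => bad_null hirs' _ L.2))
  have hU1 : μ bigU = 1 := (prob_compl_eq_zero_iff hUmeas).mp hUnull
  -- some Efull n has positive measure
  have hexn : ∃ n : ℕ, 1 ≤ n ∧ μ (Efull n : Set (Subgroup (GZ d))) ≠ 0 := by
    by_contra h
    push_neg at h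
    have : μ bigU = 0 := by
      rw [hbigU]
      exact measure_iUnion_null fun n => measure_iUnion_null fun hn => h n hn
    rw [hU1] at this
    exact one_ne_zero this
  obtain ⟨n, hn1, hnpos⟩ := hexn
  have hn1' : μ (Efull n : Set (Subgroup (GZ d))) = 1 := by
    rcases herg (Efull n) (measurableSet_Efull n) (fun g => conjZ_preimage_Efull g n) with h | h
    · exact absurd h hnpos
    · exact h
  refine ⟨n, hn1, ?_⟩
  rw [ae_iff]
  refine measure_mono_null ?_ ((prob_compl_eq_zero_iff (measurableSet_Efull n)).mpr hn1')
  intro H hH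
  simp only [Set.mem_setOf_eq] at hH
  rw [Set.mem_compl_iff]
  intro hHE
  apply hH
  intro v hdvd
  have hw : ((n : ℤ)) • (fun i => v i / (n : ℤ)) = v := by
    funext i
    simp only [Pi.smul_apply, smul_eq_mul]
    exact Int.mul_ediv_cancel' (hdvd i)
  have := hHE (fun i => v i / (n : ℤ))
  rw [hw] at this
  exact this
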